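/- Let W be a class of 1-cells of a bicategory B that admits a right bicalculus of fractions, and let A be an object of B. Then the slice bicategory W/A is cofiltered: it is non-empty and satisfies the dual filtered axioms, namely (0-Flt^op): for any objects X, Y of W/A there exist an object Z and 1-cells Z → X and Z → Y; (1-Flt^op): for any parallel 1-cells F, G : X → Y of W/A there exist an object Z, a 1-cell U : Z → X and a 2-cell F ∘ U ⟹ G ∘ U; (2-Flt^op): for any parallel 2-cells Ξ, Θ : F ⟹ G : X → Y of W/A there exist an object Z and a 1-cell U : Z → X with Ξ ▷ U = Θ ▷ U. -/

import Mathlib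

open CategoryTheory Bicategory

universe w v u

namespace Paper

variable (B : Type u) [Bicategory.{w, v} B]

/-- A 1-cell is an equivalence if there is a 1-cell in the opposite direction and invertible
2-cells relating the two composites to identities. -/
def IsEquiv1Cell {a b : B} (f : a ⟶ b) : Prop :=
  ∃ g : b ⟶ a, Nonempty (f ≫ g ≅ 𝟙 a) ∧ Nonempty (g ≫ f ≅ 𝟙 b)

/-- Axiom (0-Frc). -/
def Frc0 (W : ∀ ⦃a b : B⦄, (a ⟶ b) → Prop) : Prop :=
  ∀ ⦃A B' C : B⦄ (w : A ⟶ B') (f : C ⟶ B'), W w →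
    ∃ (D : B) (u : D ⟶ C) (h : D ⟶ A), W u ∧ Nonempty (u ≫ f ≅ h ≫ w)

/-- Axiom (1-Frc). -/
def Frc1 (W : ∀ ⦃a b : B⦄, (a ⟶ b) → Prop) : Prop :=
  ∀ ⦃B' C D : B⦄ (w : C ⟶ D) (f g : B' ⟶ C), W w → ∀ α : f ≫ w ⟶ g ≫ w,
    ∃ (A : B) (u : A ⟶ B'), W u ∧ ∃ β : u ≫ f ⟶ u ≫ g,
      (u ◁ α) ≫ (α_ u g w).inv = (α_ u f w).inv ≫ (β ▷ w)

/-- Axiom (2-Frc). -/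
def Frc2 (W : ∀ ⦃a b : B⦄, (a ⟶ b) → Prop) : Prop :=
  ∀ ⦃B' C D : B⦄ (w : C ⟶ D) (f g : B' ⟶ C), W w → ∀ α β : f ⟶ g,
    α ▷ w = β ▷ w → ∃ (A : B) (u : A ⟶ B'), W u ∧ u ◁ α = u ◁ β

/-- A class of 1-cells admits a right bicalculus of fractions. -/
structure RightBicalculus (W : ∀ ⦃a b : B⦄, (a ⟶ b) → Prop) : Prop where
  equivalences : ∀ ⦃a b : B⦄ (f : a ⟶ b), IsEquiv1Cell B f → W f
  comp : ∀ ⦃a b c : B⦄ (f : a ⟶ b) (g : b ⟶ c), W f → W g → W (f ≫ g)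
  iso_closed : ∀ ⦃a b : B⦄ (f w : a ⟶ b), W w → Nonempty (f ≅ w) → W f
  frc0 : Frc0 B W
  frc1 : Frc1 B W
  frc2 : Frc2 B W

variable {B}

/-- An object of the slice bicategory `W/A` : a 1-cell `w : C ⟶ A` in `W`. -/
structure SliceObj (W : ∀ ⦃a b : B⦄, (a ⟶ b) → Prop) (A : B) where
  C : B
  w : C ⟶ A
  mem : W w

variable {W : ∀ ⦃a b : B⦄, (a ⟶ b) → Prop} {A : B}

/-- A 1-cell of the slice bicategory `W/A` : a 1-cell `f` of `B` together with an invertible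
2-cell `α : w₁ ≅ w₂ ∘ f`. -/
structure SliceHom (X Y : SliceObj W A) where
  f : X.C ⟶ Y.C
  α : X.w ≅ f ≫ Y.w

/-- A 2-cell of the slice bicategory `W/A` : a 2-cell `ξ : f₁ ⟹ f₂` of `B` compatible with the
structure 2-cells. -/
structure Slice2 {X Y : SliceObj W A} (F G : SliceHom X Y) where
  ξ : F.f ⟶ G.f
  cond : F.α.hom ≫ (ξ ▷ Y.w) = G.α.hom

/-- Composition of 1-cells in the slice bicategory `W/A`. -/
def SliceHom.comp {X Y Z : SliceObj W A} (U : SliceHom Z X) (F : SliceHom X Y) :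
    SliceHom Z Y :=
  ⟨U.f ≫ F.f, U.α ≪≫ whiskerLeftIso U.f F.α ≪≫ (α_ U.f F.f Y.w).symm⟩

/-- Whiskering of a 2-cell of `W/A` by a 1-cell of `W/A`. -/
def SliceHom.whisk {X Y Z : SliceObj W A} (U : SliceHom Z X) {F G : SliceHom X Y}
    (Ξ : Slice2 F G) : Slice2 (U.comp F) (U.comp G) where
  ξ := U.f ◁ Ξ.ξ
  cond := by
    dsimp [SliceHom.comp, whiskerLeftIso]
    simp only [Category.assoc]
    rw [← associator_inv_naturality_middle, ← Bicategory.whiskerLeft_comp_assoc, Ξ.cond]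

theorem Slice2.ext' {X Y : SliceObj W A} {F G : SliceHom X Y} {Ξ Θ : Slice2 F G}
    (h : Ξ.ξ = Θ.ξ) : Ξ = Θ := by
  cases Ξ; cases Θ; cases h; rfl

/-- If `W` admits a right bicalculus of fractions, then the slice bicategory `W/A` is
cofiltered: it is non-empty and satisfies the dual axioms (0-Flt)ᵒᵖ, (1-Flt)ᵒᵖ, (2-Flt)ᵒᵖ. -/
theorem slice_cofiltered (hW : RightBicalculus B W) (A : B) :
    Nonempty (SliceObj W A) ∧
    (∀ X Y : SliceObj W A, ∃ (Z : SliceObj W A) (_ : SliceHom Z X) (_ : SliceHom Z Y), True) ∧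
    (∀ (X Y : SliceObj W A) (F G : SliceHom X Y),
      ∃ (Z : SliceObj W A) (U : SliceHom Z X), Nonempty (Slice2 (U.comp F) (U.comp G))) ∧
    (∀ (X Y : SliceObj W A) (F G : SliceHom X Y) (Ξ Θ : Slice2 F G),
      ∃ (Z : SliceObj W A) (U : SliceHom Z X), U.whisk Ξ = U.whisk Θ) := by
  have hid : W (𝟙 A) := hW.equivalences _ ⟨𝟙 A, ⟨ρ_ _⟩, ⟨ρ_ _⟩⟩
  refine ⟨⟨⟨A, 𝟙 A, hid⟩⟩, ?_, ?_, ?_⟩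
  · intro X Y
    obtain ⟨D, u, h, hu, ⟨e⟩⟩ := hW.frc0 X.w Y.w X.mem
    exact ⟨⟨D, u ≫ Y.w, hW.comp _ _ hu Y.mem⟩,
      ⟨h, e⟩, ⟨u, Iso.refl _⟩, trivial⟩
  · intro X Y F G
    obtain ⟨A', u, hu, β, hβ⟩ := hW.frc1 Y.w F.f G.f Y.mem (F.α.inv ≫ G.α.hom)
    refine ⟨⟨A', u ≫ X.w, hW.comp _ _ hu X.mem⟩, ⟨u, Iso.refl _⟩, ⟨⟨β, ?_⟩⟩⟩
    dsimp [SliceHom.comp]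
    simp only [Category.id_comp, Category.assoc]
    rw [← hβ]
    simp
  · intro X Y F G Ξ Θ
    have h : Ξ.ξ ▷ Y.w = Θ.ξ ▷ Y.w := by
      have := Ξ.cond.trans Θ.cond.symm
      exact (Iso.cancel_iso_hom_left F.α _ _).mp this
    obtain ⟨A', u, hu, he⟩ := hW.frc2 Y.w F.f G.f Y.mem Ξ.ξ Θ.ξ h
    exact ⟨⟨A', u ≫ X.w, hW.comp _ _ hu X.mem⟩, ⟨u, Iso.refl _⟩, Slice2.ext' he⟩

end Paper
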